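/- For all natural numbers n and m: (1) for every f ∈ E(n,m) and every lift F of f, the function g_F : ℤ → ℤ defined by g_F(k) = (m+1)·F(k/(n+1)) is well defined (i.e., (m+1)·F(k/(n+1)) is an integer for every k ∈ ℤ) and belongs to ZM(n,m); (2) the ≈-class of g_F does not depend on the choice of lift F, and two maps f, f' ∈ E(n,m) lying in the same path component of E(n,m) yield ≈-equivalent elements; (3) the resulting map from the set of path components of E(n,m) to ZM(n,m)/≈ is a bijection; (4) this identification is compatible with composition: for f ∈ E(n,m) and h ∈ E(m,l) with lifts F and H, the composite h ∘ f lies in E(n,l), H ∘ F is a lift of h ∘ f, and g_{H∘F} = g_H ∘ g_F. -/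

import Mathlib

instance : Fact ((0:ℝ) < 1) := ⟨one_pos⟩


/-- The circle `T = ℝ/ℤ`. -/
abbrev Circ : Type := AddCircle (1 : ℝ)

/-- `F : ℝ → ℝ` is a lift of `f : T → T` witnessing that `f` is a monotone degree-one map. -/
def IsLift (f : C(Circ, Circ)) (F : ℝ → ℝ) : Prop :=
  Continuous F ∧ Monotone F ∧ (∀ x : ℝ, F (x + 1) = F x + 1) ∧
    ∀ x : ℝ, f (x : Circ) = ((F x : ℝ) : Circ)

/-- The marked set `n̲ ⊆ T`, the image of `(1/(n+1))·ℤ`. -/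
def markedCirc (n : ℕ) : Set Circ :=
  {x | ∃ k : ℤ, x = (((k : ℝ) / ((n : ℝ) + 1) : ℝ) : Circ)}

/-- The mapping space `Map_{Λ_Top}(⟨n⟩,⟨m⟩)` of the topological cyclic category. -/
abbrev ECirc (n m : ℕ) : Type :=
  {f : C(Circ, Circ) //
    (∃ F : ℝ → ℝ, IsLift f F) ∧ ∀ x ∈ markedCirc n, f x ∈ markedCirc m}

/-- Membership in `ℤMon(ⁿ↺ℤ, ᵐ↺ℤ)`: monotone and equivariant. -/
def InZM (n m : ℕ) (f : ℤ → ℤ) : Prop :=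
  Monotone f ∧ ∀ k : ℤ, f (k + (n + 1)) = f k + (m + 1)

/-- `ℤMon(ⁿ↺ℤ, ᵐ↺ℤ)`: monotone `ℤ`-equivariant maps. -/
abbrev ZM (n m : ℕ) : Type := {f : ℤ → ℤ // InZM n m f}

/-- The `ℤ`-action relation `≈` on `ZM n m`. -/
def ZMrel (n m : ℕ) (f g : ZM n m) : Prop :=
  ∃ c : ℤ, ∀ k : ℤ, g.1 k = f.1 (k + c * ((n : ℤ) + 1))

/-- `g : ℤ → ℤ` is the map `g_F`, i.e. `g k = (m+1) · F (k/(n+1))`. -/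
def IsGF (n m : ℕ) (F : ℝ → ℝ) (g : ℤ → ℤ) : Prop :=
  ∀ k : ℤ, (g k : ℝ) = ((m : ℝ) + 1) * F ((k : ℝ) / ((n : ℝ) + 1))

lemma coe_eq_coe_of_int (x y : ℝ) (c : ℤ) (h : y = x + c) : (y : Circ) = (x : Circ) := by
  rw [QuotientAddGroup.eq]
  exact ⟨-c, by push_cast [zsmul_eq_mul]; linarith⟩

lemma coe_eq_coe_iff (x y : ℝ) : (y : Circ) = (x : Circ) ↔ ∃ c : ℤ, y = x + c := by
  constructor
  · intro h
    rw [QuotientAddGroup.eq] at h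
    obtain ⟨c, hc⟩ := h
    exact ⟨-c, by push_cast [zsmul_eq_mul] at hc ⊢; linarith⟩
  · rintro ⟨c, hc⟩; exact coe_eq_coe_of_int x y c hc

lemma shift_int {F : ℝ → ℝ} (hF : ∀ x : ℝ, F (x + 1) = F x + 1) (x : ℝ) (c : ℤ) :
    F (x + c) = F x + c := by
  induction c using Int.induction_on with
  | zero => simp
  | succ k ih => push_cast; rw [show x + ((k : ℝ) + 1) = (x + k) + 1 by ring, hF]; push_cast at ih; rw [ih]; ring
  | pred k ih =>
      push_cast
      have := hF (x + (-(k:ℝ) - 1))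
      push_cast at ih
      rw [show x + (-(k:ℝ) - 1) + 1 = x + -(k:ℝ) by ring] at this
      rw [ih] at this; linarith [this]

lemma zm_shift {n m : ℕ} {g : ℤ → ℤ} (hg : ∀ k : ℤ, g (k + (n + 1)) = g k + (m + 1))
    (k c : ℤ) : g (k + c * ((n : ℤ) + 1)) = g k + c * ((m : ℤ) + 1) := by
  induction c using Int.induction_on with
  | zero => simp
  | succ j ih =>
      have := hg (k + j * ((n : ℤ) + 1))
      rw [show k + (j + 1) * ((n : ℤ) + 1) = k + j * ((n : ℤ) + 1) + ((n : ℤ) + 1) by ring]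
      push_cast at this ⊢
      rw [this, ih]; ring
  | pred j ih =>
      have := hg (k + (-(j:ℤ) - 1) * ((n : ℤ) + 1))
      rw [show k + (-(j:ℤ)-1) * ((n : ℤ) + 1) + ((n:ℤ)+1) = k + (-(j:ℤ)) * ((n : ℤ) + 1) by ring] at this
      push_cast at this ih ⊢
      linarith [this, ih]

lemma zmrel_equiv (n m : ℕ) : Equivalence (ZMrel n m) := by
  constructor
  · exact fun f => ⟨0, by simp⟩
  · rintro f g ⟨c, hc⟩
    exact ⟨-c, fun k => by rw [hc (k + -c * ((n:ℤ)+1))]; ring_nf⟩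
  · rintro f g h ⟨c, hc⟩ ⟨d, hd⟩
    exact ⟨c + d, fun k => by rw [hd k, hc (k + d * ((n:ℤ)+1))]; ring_nf⟩

-- Part (1)
lemma part1 (n m : ℕ) (f : ECirc n m) (F : ℝ → ℝ) (hF : IsLift f.1 F) :
    (∀ k : ℤ, ∃ j : ℤ, ((m : ℝ) + 1) * F ((k : ℝ) / ((n : ℝ) + 1)) = (j : ℝ)) ∧
      ∃ g : ZM n m, IsGF n m F g.1 := by
  obtain ⟨hFc, hFm, hF1, hFl⟩ := hF
  have hm1 : ((m : ℝ) + 1) ≠ 0 := by positivity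
  have hn1 : ((n : ℝ) + 1) ≠ 0 := by positivity
  have key : ∀ k : ℤ, ∃ j : ℤ, ((m : ℝ) + 1) * F ((k : ℝ) / ((n : ℝ) + 1)) = (j : ℝ) := by
    intro k
    have hmem : f.1 (((k : ℝ) / ((n : ℝ) + 1) : ℝ) : Circ) ∈ markedCirc m :=
      f.2.2 _ ⟨k, rfl⟩
    obtain ⟨j, hj⟩ := hmem
    rw [hFl] at hj
    rw [coe_eq_coe_iff] at hj
    obtain ⟨c, hc⟩ := hj
    refine ⟨j + c * (m + 1), by rw [hc]; push_cast; field_simp⟩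
  refine ⟨key, ?_⟩
  choose j hj using key
  refine ⟨⟨j, ?_, ?_⟩, fun k => (hj k).symm⟩
  · intro a b hab
    have : (j a : ℝ) ≤ (j b : ℝ) := by
      rw [← hj a, ← hj b]
      have : F ((a : ℝ) / ((n : ℝ) + 1)) ≤ F ((b : ℝ) / ((n : ℝ) + 1)) := by
        apply hFm
        have hab' : (a : ℝ) ≤ (b : ℝ) := by exact_mod_cast hab
        gcongr
      nlinarith [this]
    exact_mod_cast this
  · intro k
    have : (j (k + ((n:ℤ) + 1)) : ℝ) = (j k : ℝ) + ((m : ℝ) + 1) := by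
      rw [← hj, ← hj]
      have : ((k + ((n:ℤ)+1) : ℤ) : ℝ) / ((n : ℝ) + 1) = (k : ℝ) / ((n : ℝ) + 1) + 1 := by
        push_cast; field_simp
      rw [this, hF1]; ring
    exact_mod_cast this

lemma round_const {δ : ℝ → ℝ} (hδ : Continuous δ) (h : ∀ x, |δ x - round (δ x)| < 1/2) :
    ∃ c : ℤ, ∀ x, round (δ x) = c := by
  have key : ∀ (r : ℝ) (c : ℤ), |r - c| < 1/2 → round r = c := by
    intro r c hr
    have : round (r - c) = 0 := by
      rw [round_eq_zero_iff]
      constructor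
      · rw [abs_lt] at hr; linarith [hr.1]
      · rw [abs_lt] at hr; simpa using by linarith [hr.2]
    have h2 : round (r - c + c) = round (r - c) + c := by
      exact_mod_cast round_add_intCast (r - c) c
    simpa [this] using h2
  have hlc : IsLocallyConstant (fun x => round (δ x)) := by
    rw [IsLocallyConstant.iff_eventually_eq]
    intro x
    have hcont : ContinuousAt δ x := hδ.continuousAt
    have hball : ∀ᶠ y in nhds x, |δ y - δ x| < 1/2 - |δ x - round (δ x)| := by
      have hpos : (0:ℝ) < 1/2 - |δ x - round (δ x)| := by linarith [h x]
      have := Metric.tendsto_nhds.mp (hδ.tendsto x) _ hpos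
      filter_upwards [this] with y hy
      rwa [Real.dist_eq] at hy
    filter_upwards [hball] with y hy
    apply key
    have := h x
    calc |δ y - (round (δ x) : ℝ)| ≤ |δ y - δ x| + |δ x - round (δ x)| := abs_sub_le _ _ _
    _ < 1/2 := by linarith
  exact ⟨round (δ 0), fun x => hlc.apply_eq_of_preconnectedSpace x 0⟩

lemma close_rel (n m : ℕ) (f₁ f₂ : ECirc n m) (F₁ F₂ : ℝ → ℝ) (g₁ g₂ : ℤ → ℤ)
    (h₁ : IsLift f₁.1 F₁) (h₂ : IsLift f₂.1 F₂)
    (hg₁ : IsGF n m F₁ g₁) (hg₂ : IsGF n m F₂ g₂)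
    (hc : ∀ q : Circ, ‖f₁.1 q - f₂.1 q‖ < 1/(2*((m:ℝ)+1))) :
    ∃ c : ℤ, ∀ k : ℤ, g₂ k = g₁ k + c * ((m:ℤ)+1) := by
  have hm1 : (0:ℝ) < (m:ℝ) + 1 := by positivity
  set δ : ℝ → ℝ := fun x => F₁ x - F₂ x with hδdef
  have hδc : Continuous δ := h₁.1.sub h₂.1
  have hnorm : ∀ x : ℝ, ‖((δ x : ℝ) : Circ)‖ < 1/(2*((m:ℝ)+1)) := by
    intro x
    have : ((δ x : ℝ) : Circ) = f₁.1 (x : Circ) - f₂.1 (x : Circ) := by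
      rw [h₁.2.2.2 x, h₂.2.2.2 x]; rfl
    rw [this]; exact hc _
  have hhalf : ∀ x, |δ x - round (δ x)| < 1/2 := by
    intro x
    have := hnorm x
    rw [UnitAddCircle.norm_eq] at this
    have hb : 1/(2*((m:ℝ)+1)) ≤ 1/2 := by
      rw [div_le_div_iff₀ (by positivity) (by norm_num)]; nlinarith
    linarith
  obtain ⟨c, hcr⟩ := round_const hδc hhalf
  refine ⟨-c, ?_⟩
  intro k
  set t : ℝ := (k : ℝ) / ((n : ℝ) + 1)
  have ha : ((g₁ k - g₂ k : ℤ) : ℝ) = ((m:ℝ)+1) * δ t := by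
    push_cast
    rw [hg₁ k, hg₂ k, hδdef]; ring
  have hround : |δ t - c| < 1/(2*((m:ℝ)+1)) := by
    have := hnorm t
    rw [UnitAddCircle.norm_eq, hcr t] at this
    exact this
  have : |((g₁ k - g₂ k : ℤ) : ℝ) - c * ((m:ℝ)+1)| < 1/2 := by
    rw [ha]
    have : ((m:ℝ)+1) * δ t - c * ((m:ℝ)+1) = ((m:ℝ)+1) * (δ t - c) := by ring
    rw [this, abs_mul, abs_of_pos hm1]
    calc ((m:ℝ)+1) * |δ t - c| < ((m:ℝ)+1) * (1/(2*((m:ℝ)+1))) := by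
          exact (mul_lt_mul_iff_right₀ hm1).mpr hround
    _ = 1/2 := by field_simp
  have hint : g₁ k - g₂ k - c * ((m:ℤ)+1) = 0 := by
    have habs : |((g₁ k - g₂ k - c * ((m:ℤ)+1) : ℤ) : ℝ)| < 1/2 := by
      push_cast at this ⊢
      convert this using 2 <;> ring_nf
    by_contra hne
    have h1 : (1:ℝ) ≤ |((g₁ k - g₂ k - c * ((m:ℤ)+1) : ℤ) : ℝ)| := by
      rw [← Int.cast_abs]
      exact_mod_cast Int.one_le_abs hne
    linarith
  linarith

lemma part2a (n m : ℕ) (f : ECirc n m) (F F' : ℝ → ℝ) (g g' : ZM n m)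
    (hF : IsLift f.1 F) (hF' : IsLift f.1 F') (hg : IsGF n m F g.1) (hg' : IsGF n m F' g'.1) :
    ZMrel n m g g' := by
  obtain ⟨c, hc⟩ := close_rel n m f f F F' g.1 g'.1 hF hF' hg hg'
    (fun q => by simpa using by positivity)
  exact ⟨c, fun k => by rw [zm_shift g.2.2 k c, hc k]⟩


section PL
variable (n m : ℕ) (g : ℤ → ℤ)

/-- piecewise linear interpolation of `g` -/
noncomputable def Gfun : ℝ → ℝ := fun u =>
  (g ⌊u⌋ : ℝ) + Int.fract u * ((g (⌊u⌋ + 1) : ℝ) - (g ⌊u⌋ : ℝ))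

lemma Gfun_intCast (k : ℤ) : Gfun g (k : ℝ) = (g k : ℝ) := by
  simp [Gfun]

lemma Gfun_le (hmono : Monotone g) (u : ℝ) : (g ⌊u⌋ : ℝ) ≤ Gfun g u ∧ Gfun g u ≤ (g (⌊u⌋ + 1) : ℝ) := by
  have h0 : (0:ℝ) ≤ Int.fract u := Int.fract_nonneg u
  have h1 : Int.fract u < 1 := Int.fract_lt_one u
  have hs : (g ⌊u⌋ : ℝ) ≤ (g (⌊u⌋ + 1) : ℝ) := by exact_mod_cast hmono (by omega : (⌊u⌋:ℤ) ≤ ⌊u⌋ + 1)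
  constructor
  · simp only [Gfun]; nlinarith
  · simp only [Gfun]; nlinarith

lemma Gfun_mono (hmono : Monotone g) : Monotone (Gfun g) := by
  intro u v huv
  rcases eq_or_lt_of_le (Int.floor_le_floor huv) with hf | hf
  · have hs : (g ⌊u⌋ : ℝ) ≤ (g (⌊u⌋ + 1) : ℝ) := by
      exact_mod_cast hmono (by omega : (⌊u⌋:ℤ) ≤ ⌊u⌋ + 1)
    have hfr : Int.fract u ≤ Int.fract v := by
      simp only [Int.fract, ← hf]; linarith
    simp only [Gfun, ← hf]; nlinarith
  · calc Gfun g u ≤ (g (⌊u⌋ + 1) : ℝ) := (Gfun_le g hmono u).2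
    _ ≤ (g ⌊v⌋ : ℝ) := by exact_mod_cast hmono (by omega : ⌊u⌋ + 1 ≤ ⌊v⌋)
    _ ≤ Gfun g v := (Gfun_le g hmono v).1

lemma Gfun_surj (hmono : Monotone g)
    (heq : ∀ k : ℤ, g (k + (n + 1)) = g k + (m + 1)) : Function.Surjective (Gfun g) := by
  intro y
  -- find greatest k with (g k : ℝ) ≤ y
  have hge : ∀ (k c : ℤ), g (k + c * ((n:ℤ)+1)) = g k + c * ((m:ℤ)+1) := by
    intro k c
    induction c using Int.induction_on with
    | zero => simp
    | succ j ih =>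
        have := heq (k + j * ((n : ℤ) + 1))
        rw [show k + (j + 1) * ((n : ℤ) + 1) = k + j * ((n : ℤ) + 1) + ((n : ℤ) + 1) by ring]
        push_cast at this ⊢
        rw [this, ih]; ring
    | pred j ih =>
        have := heq (k + (-(j:ℤ) - 1) * ((n : ℤ) + 1))
        rw [show k + (-(j:ℤ)-1) * ((n : ℤ) + 1) + ((n:ℤ)+1) = k + (-(j:ℤ)) * ((n : ℤ) + 1) by ring] at this
        push_cast at this ih ⊢
        linarith [this, ih]
  obtain ⟨jy, hjy'⟩ := exists_nat_ge |y - (g 0 : ℝ)|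
  rw [abs_le] at hjy'
  obtain hjy := And.intro hjy'.1 hjy'.2
  have hup : ∀ z : ℤ, (g z : ℝ) ≤ y → z ≤ (jy + 1) * ((n:ℤ)+1) := by
    intro z hz
    by_contra hlt
    push_neg at hlt
    have h1 : g ((jy + 1) * ((n:ℤ)+1)) ≤ g z := hmono hlt.le
    have h2 : g (0 + ((jy:ℤ) + 1) * ((n:ℤ)+1)) = g 0 + ((jy:ℤ)+1) * ((m:ℤ)+1) := hge 0 _
    rw [zero_add] at h2
    have : (g 0 : ℝ) + ((jy:ℝ)+1) * ((m:ℝ)+1) ≤ y := by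
      calc (g 0 : ℝ) + ((jy:ℝ)+1) * ((m:ℝ)+1) = ((g 0 + ((jy:ℤ)+1) * ((m:ℤ)+1) : ℤ) : ℝ) := by push_cast; ring
      _ = ((g ((jy + 1) * ((n:ℤ)+1)) : ℤ) : ℝ) := by rw [h2]
      _ ≤ (g z : ℝ) := by exact_mod_cast h1
      _ ≤ y := hz
    nlinarith [hjy.1, hjy.2, (by positivity : (0:ℝ) ≤ (jy:ℝ)), (by positivity : (0:ℝ) ≤ (m:ℝ))]
  have hinh : ∃ z : ℤ, (g z : ℝ) ≤ y := by
    refine ⟨(-(jy:ℤ) - 1) * ((n:ℤ)+1), ?_⟩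
    have h2 : g (0 + (-(jy:ℤ) - 1) * ((n:ℤ)+1)) = g 0 + (-(jy:ℤ)-1) * ((m:ℤ)+1) := hge 0 _
    rw [zero_add] at h2
    calc (g ((-(jy:ℤ) - 1) * ((n:ℤ)+1)) : ℝ) = (g 0 : ℝ) + (-(jy:ℝ)-1) * ((m:ℝ)+1) := by
          rw [h2]; push_cast; ring
    _ ≤ y := by nlinarith [hjy.1, (by positivity : (0:ℝ) ≤ (jy:ℝ)), (by positivity : (0:ℝ) ≤ (m:ℝ))]
  obtain ⟨k, hk, hkmax⟩ := Int.exists_greatest_of_bdd ⟨(jy + 1) * ((n:ℤ)+1), hup⟩ hinh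
  have hky : y < (g (k + 1) : ℝ) := by
    by_contra hle
    push_neg at hle
    exact absurd (hkmax (k+1) hle) (by omega)
  have hgap : (0:ℝ) < (g (k+1) : ℝ) - (g k : ℝ) := by linarith
  set s : ℝ := (y - (g k : ℝ)) / ((g (k+1) : ℝ) - (g k : ℝ)) with hs
  have hs0 : 0 ≤ s := div_nonneg (by linarith) hgap.le
  have hs1 : s < 1 := (div_lt_one hgap).mpr (by linarith)
  refine ⟨s + (k:ℝ), ?_⟩
  have hfl : ⌊s + (k:ℝ)⌋ = k := by
    rw [Int.floor_add_intCast, Int.floor_eq_zero_iff.mpr ⟨hs0, hs1⟩, zero_add]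
  have hfr : Int.fract (s + (k:ℝ)) = s := by
    rw [Int.fract_add_intCast, Int.fract_eq_self.mpr ⟨hs0, hs1⟩]
  rw [show Gfun g (s + (k:ℝ)) = (g ⌊s + (k:ℝ)⌋ : ℝ) + Int.fract (s + (k:ℝ)) * ((g (⌊s + (k:ℝ)⌋ + 1) : ℝ) - (g ⌊s + (k:ℝ)⌋ : ℝ)) from rfl, hfl, hfr, hs]
  field_simp
  ring

lemma Gfun_cont (hmono : Monotone g)
    (heq : ∀ k : ℤ, g (k + (n + 1)) = g k + (m + 1)) : Continuous (Gfun g) :=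
  (Gfun_mono g hmono).continuous_of_surjective (Gfun_surj n m g hmono heq)

lemma Gfun_shift (heq : ∀ k : ℤ, g (k + (n + 1)) = g k + (m + 1)) (u : ℝ) :
    Gfun g (u + ((n:ℝ)+1)) = Gfun g u + ((m:ℝ)+1) := by
  have hcast : u + ((n:ℝ)+1) = u + (((n:ℤ)+1 : ℤ) : ℝ) := by push_cast; ring
  have hfl : ⌊u + (((n:ℤ)+1 : ℤ) : ℝ)⌋ = ⌊u⌋ + ((n:ℤ)+1) := Int.floor_add_intCast u _
  have hfr : Int.fract (u + (((n:ℤ)+1 : ℤ) : ℝ)) = Int.fract u := Int.fract_add_intCast u _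
  have h1 : g (⌊u⌋ + ((n:ℤ)+1)) = g ⌊u⌋ + ((m:ℤ)+1) := heq ⌊u⌋
  have h2 : g (⌊u⌋ + ((n:ℤ)+1) + 1) = g (⌊u⌋ + 1) + ((m:ℤ)+1) := by
    rw [show ⌊u⌋ + ((n:ℤ)+1) + 1 = (⌊u⌋ + 1) + ((n:ℤ)+1) by ring]; exact heq _
  simp only [Gfun, hcast, hfl, hfr, h1, h2]
  push_cast
  ring

noncomputable def plF (n m : ℕ) (g : ℤ → ℤ) : ℝ → ℝ :=
  fun x => Gfun g (((n:ℝ)+1) * x) / ((m:ℝ)+1)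

lemma plF_mono (hmono : Monotone g) : Monotone (plF n m g) := by
  intro x y hxy
  have h1 : Gfun g (((n:ℝ)+1) * x) ≤ Gfun g (((n:ℝ)+1) * y) :=
    Gfun_mono g hmono (by nlinarith [(by positivity : (0:ℝ) ≤ (n:ℝ))])
  simp only [plF, div_eq_mul_inv]
  exact mul_le_mul_of_nonneg_right h1 (by positivity)

lemma plF_cont (hmono : Monotone g)
    (heq : ∀ k : ℤ, g (k + (n + 1)) = g k + (m + 1)) : Continuous (plF n m g) :=
  ((Gfun_cont n m g hmono heq).comp (by continuity)).div_const _

lemma plF_shift (heq : ∀ k : ℤ, g (k + (n + 1)) = g k + (m + 1)) (x : ℝ) :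
    plF n m g (x + 1) = plF n m g x + 1 := by
  simp only [plF]
  rw [show ((n:ℝ)+1) * (x+1) = ((n:ℝ)+1)*x + ((n:ℝ)+1) by ring, Gfun_shift n m g heq]
  have : ((m:ℝ)+1) ≠ 0 := by positivity
  field_simp

lemma plF_marked (k : ℤ) : plF n m g ((k:ℝ) / ((n:ℝ)+1)) = (g k : ℝ) / ((m:ℝ)+1) := by
  have hn : ((n:ℝ)+1) ≠ 0 := by positivity
  simp only [plF]
  rw [show ((n:ℝ)+1) * ((k:ℝ) / ((n:ℝ)+1)) = (k:ℝ) by field_simp, Gfun_intCast]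
end PL

section CircleMaps

/-- descend `F : ℝ → ℝ` with `F (x + c) = F x + c` to the circle -/
noncomputable def circMap (F : ℝ → ℝ) (hF : ∀ x : ℝ, F (x + 1) = F x + 1) : Circ → Circ :=
  fun q => Quotient.liftOn' q (fun x => ((F x : ℝ) : Circ)) (by
    intro a b hab
    have hmem : -a + b ∈ AddSubgroup.zmultiples (1:ℝ) := QuotientAddGroup.leftRel_apply.mp hab
    obtain ⟨c, hc⟩ := hmem
    simp only [zsmul_eq_mul, mul_one] at hc
    have hb : b = a + c := by linarith
    have : F b = F a + c := by rw [hb, shift_int hF]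
    exact (coe_eq_coe_of_int (F a) (F b) c this).symm)

lemma circMap_coe (F : ℝ → ℝ) (hF : ∀ x : ℝ, F (x + 1) = F x + 1) (x : ℝ) :
    circMap F hF ((x : ℝ) : Circ) = ((F x : ℝ) : Circ) := rfl

lemma circMap_continuous (F : ℝ → ℝ) (hF : ∀ x : ℝ, F (x + 1) = F x + 1)
    (hFc : Continuous F) : Continuous (circMap F hF) := by
  rw [(QuotientAddGroup.isOpenQuotientMap_mk (N := AddSubgroup.zmultiples (1:ℝ))).isQuotientMap.continuous_iff]
  exact (AddCircle.continuous_mk' 1).comp hFc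


lemma straight_joined (n m : ℕ) (f f' : ECirc n m) (F F' : ℝ → ℝ) (g : ℤ → ℤ)
    (hF : IsLift f.1 F) (hF' : IsLift f'.1 F') (hg : IsGF n m F g) (hg' : IsGF n m F' g) :
    Joined f f' := by
  have hm1 : ((m:ℝ)+1) ≠ 0 := by positivity
  set Φ : unitInterval → ℝ → ℝ := fun t x => (1 - (t:ℝ)) * F x + (t:ℝ) * F' x with hΦ
  have hΦshift : ∀ t x, Φ t (x+1) = Φ t x + 1 := by
    intro t x; simp only [hΦ, hF.2.2.1, hF'.2.2.1]; ring
  have hΦcont : Continuous (fun p : unitInterval × ℝ => Φ p.1 p.2) := by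
    apply Continuous.add
    · exact (continuous_const.sub (continuous_subtype_val.comp continuous_fst)).mul
        (hF.1.comp continuous_snd)
    · exact (continuous_subtype_val.comp continuous_fst).mul (hF'.1.comp continuous_snd)
  set K : unitInterval × Circ → Circ := fun p => circMap (Φ p.1) (hΦshift p.1) p.2 with hK
  have Kcont : Continuous K := by
    have hq : IsOpenQuotientMap (QuotientAddGroup.mk : ℝ → Circ) :=
      QuotientAddGroup.isOpenQuotientMap_mk
    rw [(IsOpenQuotientMap.id.prodMap hq).isQuotientMap.continuous_iff]
    exact (AddCircle.continuous_mk' 1).comp hΦcont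
  have hKapp : ∀ (t : unitInterval) (x : ℝ), K (t, (x : Circ)) = ((Φ t x : ℝ) : Circ) :=
    fun t x => rfl
  have hmarked : ∀ (t : unitInterval) (k : ℤ), Φ t ((k:ℝ)/((n:ℝ)+1)) = (g k : ℝ)/((m:ℝ)+1) := by
    intro t k
    have h1 : F ((k:ℝ)/((n:ℝ)+1)) = (g k : ℝ)/((m:ℝ)+1) := by
      rw [eq_div_iff hm1]; linarith [hg k]
    have h2 : F' ((k:ℝ)/((n:ℝ)+1)) = (g k : ℝ)/((m:ℝ)+1) := by
      rw [eq_div_iff hm1]; linarith [hg' k]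
    simp only [hΦ, h1, h2]; ring
  have hmem : ∀ t : unitInterval,
      (∃ G : ℝ → ℝ, IsLift (ContinuousMap.curry ⟨K, Kcont⟩ t) G) ∧
        ∀ x ∈ markedCirc n, (ContinuousMap.curry ⟨K, Kcont⟩ t) x ∈ markedCirc m := by
    intro t
    have hlift : IsLift (ContinuousMap.curry ⟨K, Kcont⟩ t) (Φ t) := by
      refine ⟨?_, ?_, hΦshift t, fun x => rfl⟩
      · exact hΦcont.comp (Continuous.prodMk_right t)
      · intro a b hab
        have h0 : (0:ℝ) ≤ (t:ℝ) := t.2.1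
        have h1 : (t:ℝ) ≤ 1 := t.2.2
        have := hF.2.1 hab
        have := hF'.2.1 hab
        simp only [hΦ]
        nlinarith
    refine ⟨⟨Φ t, hlift⟩, ?_⟩
    rintro x ⟨k, rfl⟩
    refine ⟨g k, ?_⟩
    rw [hlift.2.2.2, hmarked t k]
  refine ⟨⟨⟨fun t => ⟨ContinuousMap.curry ⟨K, Kcont⟩ t, hmem t⟩, ?_⟩, ?_, ?_⟩⟩
  · exact Continuous.subtype_mk (ContinuousMap.curry ⟨K, Kcont⟩).continuous _
  · apply Subtype.ext
    apply ContinuousMap.ext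
    intro q
    induction q using QuotientAddGroup.induction_on with
    | H x =>
        show K (0, (x : Circ)) = f.1 (x : Circ)
        rw [hKapp, hF.2.2.2 x]
        norm_num [hΦ]
  · apply Subtype.ext
    apply ContinuousMap.ext
    intro q
    induction q using QuotientAddGroup.induction_on with
    | H x =>
        show K (1, (x : Circ)) = f'.1 (x : Circ)
        rw [hKapp, hF'.2.2.2 x]
        norm_num [hΦ]

lemma joined_of_rel (n m : ℕ) (f f' : ECirc n m) (F F' : ℝ → ℝ) (g g' : ZM n m)
    (hF : IsLift f.1 F) (hF' : IsLift f'.1 F') (hg : IsGF n m F g.1) (hg' : IsGF n m F' g'.1)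
    (hrel : ZMrel n m g g') : Joined f f' := by
  obtain ⟨c, hc⟩ := hrel
  have hn1 : ((n:ℝ)+1) ≠ 0 := by positivity
  set Ft : ℝ → ℝ := fun x => F (x + c) with hFt
  have hFtlift : IsLift f.1 Ft := by
    refine ⟨hF.1.comp (by continuity), ?_, ?_, ?_⟩
    · exact fun a b hab => hF.2.1 (by linarith)
    · intro x; simp only [hFt]
      rw [show x + 1 + (c:ℝ) = (x + (c:ℝ)) + 1 by ring, hF.2.2.1]
    · intro x
      rw [hF.2.2.2 x]
      exact (coe_eq_coe_of_int (F x) (Ft x) c (shift_int hF.2.2.1 x c)).symm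
  have hFtgf : IsGF n m Ft g'.1 := by
    intro k
    rw [hc k]
    have h1 : ((k + c * ((n:ℤ)+1) : ℤ) : ℝ) / ((n:ℝ)+1) = (k:ℝ)/((n:ℝ)+1) + (c:ℝ) := by
      rw [div_eq_iff hn1]; push_cast; field_simp
    rw [hg (k + c * ((n:ℤ)+1)), h1]
  exact straight_joined n m f f' Ft F' g'.1 hFtlift hF' hFtgf hg'

end CircleMaps

noncomputable def Flift (n m : ℕ) (e : ECirc n m) : ℝ → ℝ := e.2.1.choose

lemma Flift_spec (n m : ℕ) (e : ECirc n m) : IsLift e.1 (Flift n m e) := e.2.1.choose_spec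

noncomputable def canonG (n m : ℕ) (e : ECirc n m) : ZM n m :=
  (part1 n m e (Flift n m e) (Flift_spec n m e)).2.choose

lemma canonG_spec (n m : ℕ) (e : ECirc n m) : IsGF n m (Flift n m e) (canonG n m e).1 :=
  (part1 n m e (Flift n m e) (Flift_spec n m e)).2.choose_spec

lemma part2b (n m : ℕ) (f f' : ECirc n m) (F F' : ℝ → ℝ) (g g' : ZM n m)
    (hF : IsLift f.1 F) (hF' : IsLift f'.1 F') (hg : IsGF n m F g.1) (hg' : IsGF n m F' g'.1)
    (hj : Joined f f') : ZMrel n m g g' := by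
  obtain ⟨γ⟩ := hj
  have hε : (0:ℝ) < 1/(2*((m:ℝ)+1)) := by positivity
  have key : ∀ t s : unitInterval, dist ((γ s).1 : C(Circ, Circ)) ((γ t).1) < 1/(2*((m:ℝ)+1)) →
      ZMrel n m (canonG n m (γ s)) (canonG n m (γ t)) := by
    intro t s hd
    obtain ⟨c, hc⟩ := close_rel n m (γ s) (γ t) (Flift n m (γ s)) (Flift n m (γ t))
      (canonG n m (γ s)).1 (canonG n m (γ t)).1 (Flift_spec n m (γ s)) (Flift_spec n m (γ t))
      (canonG_spec n m (γ s)) (canonG_spec n m (γ t))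
      (fun q => by
        rw [← dist_eq_norm]
        exact lt_of_le_of_lt (ContinuousMap.dist_apply_le_dist q) hd)
    exact ⟨c, fun k => by rw [zm_shift (canonG n m (γ s)).2.2 k c, hc k]⟩
  set h : unitInterval → Quot (ZMrel n m) := fun t => Quot.mk _ (canonG n m (γ t)) with hh
  have hlc : IsLocallyConstant h := by
    rw [IsLocallyConstant.iff_eventually_eq]
    intro t
    have hcont : Continuous fun s : unitInterval => ((γ s).1 : C(Circ, Circ)) :=
      continuous_subtype_val.comp γ.continuous
    have hev : ∀ᶠ s in nhds t, dist ((γ s).1 : C(Circ, Circ)) ((γ t).1) < 1/(2*((m:ℝ)+1)) :=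
      Metric.tendsto_nhds.mp (hcont.tendsto t) _ hε
    filter_upwards [hev] with s hs
    exact Quot.sound (key t s hs)
  have h01 : h 0 = h 1 := hlc.apply_eq_of_preconnectedSpace 0 1
  have hmk : Quot.mk (ZMrel n m) (canonG n m f) = Quot.mk (ZMrel n m) (canonG n m f') := by
    have h0 : γ 0 = f := γ.source
    have h1 : γ 1 = f' := γ.target
    simpa only [hh, h0, h1] using h01
  have hmid : ZMrel n m (canonG n m f) (canonG n m f') :=
    ((zmrel_equiv n m).eqvGen_iff).mp (Quot.eq.mp hmk)
  have hstart : ZMrel n m g (canonG n m f) :=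
    part2a n m f F (Flift n m f) g (canonG n m f) hF (Flift_spec n m f) hg (canonG_spec n m f)
  have hend : ZMrel n m (canonG n m f') g' :=
    part2a n m f' (Flift n m f') F' (canonG n m f') g' (Flift_spec n m f') hF'
      (canonG_spec n m f') hg'
  exact (zmrel_equiv n m).trans ((zmrel_equiv n m).trans hstart hmid) hend

lemma exists_ecirc (n m : ℕ) (g : ZM n m) :
    ∃ e : ECirc n m, IsLift e.1 (plF n m g.1) ∧ IsGF n m (plF n m g.1) g.1 := by
  have hm1 : ((m:ℝ)+1) ≠ 0 := by positivity
  set F := plF n m g.1 with hFdef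
  have hshift : ∀ x : ℝ, F (x + 1) = F x + 1 := plF_shift n m g.1 g.2.2
  have hcont : Continuous F := plF_cont n m g.1 g.2.1 g.2.2
  have hmono : Monotone F := plF_mono n m g.1 g.2.1
  set fmap : C(Circ, Circ) := ⟨circMap F hshift, circMap_continuous F hshift hcont⟩ with hf
  have hlift : IsLift fmap F := ⟨hcont, hmono, hshift, fun x => rfl⟩
  have hgf : IsGF n m F g.1 := by
    intro k
    rw [hFdef, plF_marked]
    field_simp
  refine ⟨⟨fmap, ⟨F, hlift⟩, ?_⟩, hlift, hgf⟩
  rintro x ⟨k, rfl⟩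
  exact ⟨g.1 k, by rw [hlift.2.2.2, hFdef, plF_marked]⟩


/-- The identification `π₀ Map_{Λ_Top}(⟨n⟩,⟨m⟩) ≅ ℤMon(ⁿ↺ℤ, ᵐ↺ℤ)/ℤ`:
(1) `g_F` is a well-defined element of `ZM n m`; (2) its `≈`-class is independent of the lift
and invariant on path components; (3) the induced map on path components is a bijection;
(4) the identification is compatible with composition. -/
theorem stmt_4 (n m l : ℕ) :
    -- (1) well-definedness: `(m+1)·F(k/(n+1))` is an integer, and `g_F ∈ ZM(n,m)`
    (∀ f : ECirc n m, ∀ F : ℝ → ℝ, IsLift f.1 F →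
      (∀ k : ℤ, ∃ j : ℤ, ((m : ℝ) + 1) * F ((k : ℝ) / ((n : ℝ) + 1)) = (j : ℝ)) ∧
      ∃ g : ZM n m, IsGF n m F g.1) ∧
    -- (2a) independence of the lift
    (∀ f : ECirc n m, ∀ F F' : ℝ → ℝ, ∀ g g' : ZM n m,
      IsLift f.1 F → IsLift f.1 F' → IsGF n m F g.1 → IsGF n m F' g'.1 →
      ZMrel n m g g') ∧
    -- (2b) maps in the same path component give `≈`-equivalent elements
    (∀ f f' : ECirc n m, ∀ F F' : ℝ → ℝ, ∀ g g' : ZM n m,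
      IsLift f.1 F → IsLift f'.1 F' → IsGF n m F g.1 → IsGF n m F' g'.1 →
      Joined f f' → ZMrel n m g g') ∧
    -- (3) the resulting map `π₀ E(n,m) → ZM(n,m)/≈` is a bijection
    (∃ Φ : Quot (fun f f' : ECirc n m => Joined f f') → Quot (ZMrel n m),
      Function.Bijective Φ ∧
      ∀ (f : ECirc n m) (F : ℝ → ℝ) (g : ZM n m), IsLift f.1 F → IsGF n m F g.1 →
        Φ (Quot.mk _ f) = Quot.mk _ g) ∧
    -- (4) compatibility with composition
    (∀ (f : ECirc n m) (h : ECirc m l) (F H : ℝ → ℝ) (g g' : ℤ → ℤ),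
      IsLift f.1 F → IsLift h.1 H → IsGF n m F g → IsGF m l H g' →
      IsLift (h.1.comp f.1) (H ∘ F) ∧
      (∀ x ∈ markedCirc n, (h.1.comp f.1) x ∈ markedCirc l) ∧
      IsGF n l (H ∘ F) (g' ∘ g)) := by
  refine ⟨part1 n m, part2a n m, part2b n m, ?_, ?_⟩
  · -- part 3
    have hresp : ∀ f f' : ECirc n m, Joined f f' →
        Quot.mk (ZMrel n m) (canonG n m f) = Quot.mk (ZMrel n m) (canonG n m f') := by
      intro f f' hj
      exact Quot.sound (part2b n m f f' (Flift n m f) (Flift n m f') (canonG n m f)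
        (canonG n m f') (Flift_spec n m f) (Flift_spec n m f') (canonG_spec n m f)
        (canonG_spec n m f') hj)
    refine ⟨Quot.lift (fun f => Quot.mk (ZMrel n m) (canonG n m f)) hresp, ⟨?_, ?_⟩, ?_⟩
    · -- injective
      intro a b
      induction a using Quot.ind with
      | _ f =>
      induction b using Quot.ind with
      | _ f' =>
      intro hab
      have hab' : Quot.mk (ZMrel n m) (canonG n m f) = Quot.mk (ZMrel n m) (canonG n m f') := hab
      have hrel : ZMrel n m (canonG n m f) (canonG n m f') :=
        ((zmrel_equiv n m).eqvGen_iff).mp (Quot.eq.mp hab')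
      exact Quot.sound (joined_of_rel n m f f' (Flift n m f) (Flift n m f') (canonG n m f)
        (canonG n m f') (Flift_spec n m f) (Flift_spec n m f') (canonG_spec n m f)
        (canonG_spec n m f') hrel)
    · -- surjective
      intro q
      induction q using Quot.ind with
      | _ g =>
      obtain ⟨e, hl, hgf⟩ := exists_ecirc n m g
      refine ⟨Quot.mk _ e, ?_⟩
      have : ZMrel n m (canonG n m e) g :=
        part2a n m e (Flift n m e) (plF n m g.1) (canonG n m e) g (Flift_spec n m e) hl
          (canonG_spec n m e) hgf
      exact Quot.sound this
    · -- compatibility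
      intro f F g hF hg
      have : ZMrel n m (canonG n m f) g :=
        part2a n m f (Flift n m f) F (canonG n m f) g (Flift_spec n m f) hF
          (canonG_spec n m f) hg
      exact Quot.sound this
  · -- part 4
    intro f h F H g g' hF hH hg hg'
    have hm1 : ((m:ℝ)+1) ≠ 0 := by positivity
    refine ⟨⟨hH.1.comp hF.1, hH.2.1.comp hF.2.1, ?_, ?_⟩, ?_, ?_⟩
    · intro x
      simp only [Function.comp_apply]
      rw [hF.2.2.1, hH.2.2.1]
    · intro x
      rw [ContinuousMap.comp_apply, hF.2.2.2, hH.2.2.2]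
      rfl
    · intro x hx
      rw [ContinuousMap.comp_apply]
      exact h.2.2 _ (f.2.2 x hx)
    · intro k
      have h1 : F ((k:ℝ)/((n:ℝ)+1)) = ((g k : ℤ):ℝ)/((m:ℝ)+1) := by
        rw [eq_div_iff hm1]; linarith [hg k]
      calc ((g' (g k) : ℤ):ℝ) = ((l:ℝ)+1) * H (((g k:ℤ):ℝ)/((m:ℝ)+1)) := hg' (g k)
      _ = ((l:ℝ)+1) * (H ∘ F) ((k:ℝ)/((n:ℝ)+1)) := by
          rw [Function.comp_apply, h1]
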